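/- An R-module M is strongly Gorenstein projective if and only if there exists a short exact sequence of R-modules 0 → M → P → M → 0 with P projective, and Ext^1_R(M, Q) = 0 for every projective R-module Q. -/

import Mathlib

universe u

open LinearMap DirectSum

section Defs

variable (R : Type u) [CommRing R]

/-- `Ext¹_R(M, Q) = 0`, expressed by the splitting of all extensions of `M` by `Q`. -/
def Ext1Zero (M Q : Type u) [AddCommGroup M] [Module R M] [AddCommGroup Q] [Module R Q] :
    Prop :=
  ∀ (E : ModuleCat.{u} R) (i : Q →ₗ[R] E) (p : E →ₗ[R] M),
    Function.Injective i → Function.Surjective p → LinearMap.range i = LinearMap.ker p →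
      ∃ s : M →ₗ[R] E, p ∘ₗ s = LinearMap.id

/-- `Tor₁^R(M, N) = 0`, expressed via flat presentations of `N`:
for every surjection `p : F ↠ N` with `F` flat, `ker p ⊗ M → F ⊗ M` is injective. -/
def Tor1Zero (M N : Type u) [AddCommGroup M] [Module R M] [AddCommGroup N] [Module R N] :
    Prop :=
  ∀ (F : ModuleCat.{u} R), Module.Flat R F →
    ∀ p : F →ₗ[R] N, Function.Surjective p →
      Function.Injective (LinearMap.rTensor M (LinearMap.ker p).subtype)

/-- `M` is strongly Gorenstein projective: there is an exact complex
`⋯ → P → P → P → ⋯` with a single projective `P` and single differential `f`,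
which stays exact under `Hom(-, Q)` for every projective `Q`, and `M ≅ Im f`. -/
def IsSGProjective (M : Type u) [AddCommGroup M] [Module R M] : Prop :=
  ∃ P : ModuleCat.{u} R, Module.Projective R P ∧
    ∃ f : P →ₗ[R] P, f ∘ₗ f = 0 ∧ LinearMap.ker f = LinearMap.range f ∧
      Nonempty (M ≃ₗ[R] LinearMap.range f) ∧
      ∀ Q : ModuleCat.{u} R, Module.Projective R Q →
        ∀ g : P →ₗ[R] Q, g ∘ₗ f = 0 → ∃ h : P →ₗ[R] Q, g = h ∘ₗ f

/-- `M` is strongly Gorenstein flat: there is an exact complex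
`⋯ → F → F → F → ⋯` with a single flat `F` and single differential `f`,
which stays exact under `- ⊗ I` for every injective `I`, and `M ≅ Im f`. -/
def IsSGFlat (M : Type u) [AddCommGroup M] [Module R M] : Prop :=
  ∃ F : ModuleCat.{u} R, Module.Flat R F ∧
    ∃ f : F →ₗ[R] F, f ∘ₗ f = 0 ∧ LinearMap.ker f = LinearMap.range f ∧
      Nonempty (M ≃ₗ[R] LinearMap.range f) ∧
      ∀ I : ModuleCat.{u} R, Module.Injective R I →
        LinearMap.ker (LinearMap.rTensor I f) = LinearMap.range (LinearMap.rTensor I f)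

/-- `M` is Gorenstein projective: it is a syzygy of a totally acyclic complex of
projective modules. -/
def IsGProjective (M : Type u) [AddCommGroup M] [Module R M] : Prop :=
  ∃ (P : ℤ → ModuleCat.{u} R) (d : ∀ i : ℤ, P (i + 1) →ₗ[R] P i),
    (∀ i, Module.Projective R (P i)) ∧
    (∀ i, d i ∘ₗ d (i + 1) = 0) ∧
    (∀ i, LinearMap.ker (d i) = LinearMap.range (d (i + 1))) ∧
    Nonempty (M ≃ₗ[R] LinearMap.range (d 0)) ∧
    ∀ Q : ModuleCat.{u} R, Module.Projective R Q →
      ∀ (i : ℤ) (g : P (i + 1) →ₗ[R] Q), g ∘ₗ d (i + 1) = 0 →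
        ∃ h : P i →ₗ[R] Q, g = h ∘ₗ d i

/-- `M` is Gorenstein flat: it is a syzygy of an exact complex of flat modules
which stays exact under `- ⊗ I` for every injective `I`. -/
def IsGFlat (M : Type u) [AddCommGroup M] [Module R M] : Prop :=
  ∃ (F : ℤ → ModuleCat.{u} R) (d : ∀ i : ℤ, F (i + 1) →ₗ[R] F i),
    (∀ i, Module.Flat R (F i)) ∧
    (∀ i, d i ∘ₗ d (i + 1) = 0) ∧
    (∀ i, LinearMap.ker (d i) = LinearMap.range (d (i + 1))) ∧
    Nonempty (M ≃ₗ[R] LinearMap.range (d 0)) ∧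
    ∀ I : ModuleCat.{u} R, Module.Injective R I →
      ∀ i : ℤ, LinearMap.ker (LinearMap.rTensor I (d i)) =
        LinearMap.range (LinearMap.rTensor I (d (i + 1)))

/-- A class of `R`-modules is projectively resolving if it contains the projectives and,
in every short exact sequence `0 → A → B → C → 0` with `C` in the class, `A` is in the
class iff `B` is. -/
def ProjResolving (X : ModuleCat.{u} R → Prop) : Prop :=
  (∀ P : ModuleCat.{u} R, Module.Projective R P → X P) ∧
  ∀ (A B C : ModuleCat.{u} R) (i : A →ₗ[R] B) (p : B →ₗ[R] C),
    Function.Injective i → Function.Surjective p → LinearMap.range i = LinearMap.ker p →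
      X C → (X A ↔ X B)

/-- Gorenstein projective dimension at most `n`. -/
def GpdLE : ℕ → ModuleCat.{u} R → Prop
  | 0, M => IsGProjective R M
  | n + 1, M => ∃ (G : ModuleCat.{u} R) (p : G →ₗ[R] M),
      IsGProjective R G ∧ Function.Surjective p ∧ GpdLE n (ModuleCat.of R (LinearMap.ker p))

/-- Gorenstein flat dimension at most `n`. -/
def GfdLE : ℕ → ModuleCat.{u} R → Prop
  | 0, M => IsGFlat R M
  | n + 1, M => ∃ (G : ModuleCat.{u} R) (p : G →ₗ[R] M),
      IsGFlat R G ∧ Function.Surjective p ∧ GfdLE n (ModuleCat.of R (LinearMap.ker p))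

/-- Flat dimension at most `n`. -/
def FlatDimLE : ℕ → ModuleCat.{u} R → Prop
  | 0, M => Module.Flat R M
  | n + 1, M => ∃ (G : ModuleCat.{u} R) (p : G →ₗ[R] M),
      Module.Flat R G ∧ Function.Surjective p ∧ FlatDimLE n (ModuleCat.of R (LinearMap.ker p))

/-- Projective dimension at most `n`. -/
def ProjDimLE : ℕ → ModuleCat.{u} R → Prop
  | 0, M => Module.Projective R M
  | n + 1, M => ∃ (G : ModuleCat.{u} R) (p : G →ₗ[R] M),
      Module.Projective R G ∧ Function.Surjective p ∧
        ProjDimLE n (ModuleCat.of R (LinearMap.ker p))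

/-- `R` is a coherent ring: every finitely generated ideal is finitely presented. -/
def IsCoherent : Prop :=
  ∀ I : Ideal R, I.FG → Module.FinitePresentation R I

end Defs

section Helpers
variable {R : Type u} [CommRing R]

lemma factor_surj {P M Q : Type u} [AddCommGroup P] [Module R P]
    [AddCommGroup M] [Module R M] [AddCommGroup Q] [Module R Q]
    (p : P →ₗ[R] M) (hp : Function.Surjective p) (g : P →ₗ[R] Q)
    (hg : LinearMap.ker p ≤ LinearMap.ker g) : ∃ g' : M →ₗ[R] Q, g' ∘ₗ p = g := by
  let e := p.quotKerEquivOfSurjective hp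
  refine ⟨(LinearMap.ker p).liftQ g hg ∘ₗ (e.symm : M →ₗ[R] _), ?_⟩
  ext x
  have hx : e.symm (p x) = Submodule.Quotient.mk x := by
    apply e.injective
    simp [e, LinearMap.quotKerEquivOfSurjective]
  simp [hx]

lemma factor_inj {E Q P : Type u} [AddCommGroup E] [Module R E]
    [AddCommGroup Q] [Module R Q] [AddCommGroup P] [Module R P]
    (j : Q →ₗ[R] E) (hj : Function.Injective j) (t : P →ₗ[R] E)
    (ht : LinearMap.range t ≤ LinearMap.range j) : ∃ h : P →ₗ[R] Q, j ∘ₗ h = t := by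
  refine ⟨(LinearEquiv.ofInjective j hj).symm.toLinearMap ∘ₗ
    t.codRestrict (LinearMap.range j) (fun x => ht ⟨x, rfl⟩), ?_⟩
  ext x
  have : ∀ y : LinearMap.range j, j ((LinearEquiv.ofInjective j hj).symm y) = (y : E) := by
    intro y
    rw [← LinearEquiv.ofInjective_apply (h := hj), (LinearEquiv.ofInjective j hj).apply_symm_apply]
  simp [this]

end Helpers

/-- An `R`-module `M` is strongly Gorenstein projective iff there is a short
exact sequence `0 → M → P → M → 0` with `P` projective and `Ext¹_R(M, Q) = 0` for every
projective `R`-module `Q`. -/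
theorem stmt0 (R : Type u) [CommRing R] (M : Type u) [AddCommGroup M] [Module R M] :
    IsSGProjective R M ↔
      (∃ (P : ModuleCat.{u} R), Module.Projective R P ∧
        ∃ (i : M →ₗ[R] P) (p : P →ₗ[R] M),
          Function.Injective i ∧ Function.Surjective p ∧
            LinearMap.range i = LinearMap.ker p) ∧
      ∀ Q : ModuleCat.{u} R, Module.Projective R Q → Ext1Zero R M Q := by
  constructor
  · rintro ⟨P, hP, f, hff, hkr, ⟨e⟩, hext⟩
    -- the "corestricted" map P → M
    set fbar : ↥P →ₗ[R] M := (e.symm : LinearMap.range f →ₗ[R] M) ∘ₗ f.rangeRestrict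
      with hfbar
    have hfbar_surj : Function.Surjective fbar := by
      exact e.symm.surjective.comp f.surjective_rangeRestrict
    have hfbar_ker : LinearMap.ker fbar = LinearMap.ker f := by
      rw [hfbar, LinearEquiv.ker_comp, LinearMap.ker_rangeRestrict]
    have hfbarf : fbar ∘ₗ f = 0 := by
      ext x
      have : f (f x) = 0 := by
        have := congrArg (fun g => g x) hff; simpa using this
      have hz : f.rangeRestrict (f x) = 0 := Subtype.ext (by simpa using this)
      simp [hfbar, hz]
    set i : M →ₗ[R] ↥P := (LinearMap.range f).subtype ∘ₗ (e : M →ₗ[R] LinearMap.range f)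
      with hi
    refine ⟨⟨P, hP, i, fbar, ?_, hfbar_surj, ?_⟩, ?_⟩
    · exact (LinearMap.range f).injective_subtype.comp e.injective
    · -- range i = ker fbar
      have hri : LinearMap.range i = LinearMap.range f := by
        rw [hi, LinearMap.range_comp, LinearEquiv.range, Submodule.map_top,
          Submodule.range_subtype]
      rw [hfbar_ker, hri]
      exact hkr.symm
    · -- Ext¹ vanishing
      intro Q hQ E ι π hι hπ hιπ
      obtain ⟨t, ht⟩ := Module.projective_lifting_property π fbar hπ
      have h1 : LinearMap.range (t ∘ₗ f) ≤ LinearMap.range ι := by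
        rw [hιπ]
        rintro x ⟨y, rfl⟩
        have : π ((t ∘ₗ f) y) = 0 := by
          have : (π ∘ₗ t) (f y) = fbar (f y) := by rw [ht]
          rw [LinearMap.comp_apply]
          rw [LinearMap.comp_apply] at this
          rw [this]
          have := congrArg (fun g => g y) hfbarf; simpa using this
        exact this
      obtain ⟨g, hg⟩ := factor_inj ι hι (t ∘ₗ f) h1
      have hgf : g ∘ₗ f = 0 := by
        have : ι ∘ₗ (g ∘ₗ f) = 0 := by
          rw [← LinearMap.comp_assoc, hg, LinearMap.comp_assoc, hff, LinearMap.comp_zero]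
        ext x
        apply hι
        have := congrArg (fun k => k x) this
        simpa using this
      obtain ⟨h, hh⟩ := hext Q hQ g hgf
      set t' : ↥P →ₗ[R] E := t - ι ∘ₗ h with ht'
      have ht'f : t' ∘ₗ f = 0 := by
        rw [ht', LinearMap.sub_comp, LinearMap.comp_assoc, ← hh, hg, sub_self]
      have hπt' : π ∘ₗ t' = fbar := by
        ext x
        have h3 : π (t x) = fbar x := by
          have := congrArg (fun k => k x) ht; simpa using this
        have h4 : π (ι (h x)) = 0 := by
          have : ι (h x) ∈ LinearMap.ker π := hιπ ▸ LinearMap.mem_range_self ι (h x)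
          exact this
        simp [ht', h3, h4]
      obtain ⟨s, hs⟩ := factor_surj fbar hfbar_surj t' (by
        rw [hfbar_ker, hkr]
        rintro x ⟨y, rfl⟩
        have := congrArg (fun k => k y) ht'f
        simpa using this)
      refine ⟨s, ?_⟩
      ext m
      obtain ⟨x, rfl⟩ := hfbar_surj m
      have h2 : s (fbar x) = t' x := by
        have := congrArg (fun k => k x) hs; simpa using this
      simp only [LinearMap.comp_apply, LinearMap.id_apply, h2]
      have := congrArg (fun k => k x) hπt'; simpa using this
  · rintro ⟨⟨P, hP, i, p, hi, hp, hip⟩, hext1⟩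
    set f : ↥P →ₗ[R] P := i ∘ₗ p with hf
    have hpi : ∀ m, p (i m) = 0 := by
      intro m
      have : i m ∈ LinearMap.ker p := hip ▸ LinearMap.mem_range_self i m
      exact this
    have hff : f ∘ₗ f = 0 := by
      ext x; simp [hf, hpi]
    have hrange : LinearMap.range f = LinearMap.range i := by
      rw [hf, LinearMap.range_comp, LinearMap.range_eq_top.mpr hp, Submodule.map_top]
    have hker : LinearMap.ker f = LinearMap.range f := by
      rw [hrange, hip]
      ext x
      simp only [LinearMap.mem_ker, hf, LinearMap.comp_apply]
      constructor
      · intro h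
        exact hi (by rw [map_zero]; exact h)
      · intro h
        rw [h, map_zero]
    refine ⟨P, hP, f, hff, hker, ⟨?_⟩, ?_⟩
    · exact (LinearEquiv.ofInjective i hi).trans (LinearEquiv.ofEq _ _ hrange.symm)
    · intro Q hQ g hgf
      -- g vanishes on ker p = range i
      have hgi : ∀ m, g (i m) = 0 := by
        intro m
        obtain ⟨x, hx⟩ := hp m
        have := congrArg (fun k => k x) hgf
        simpa [hf, hx] using this
      obtain ⟨gbar, hgbar⟩ := factor_surj p hp g (by
        rw [← hip]; rintro x ⟨m, rfl⟩; exact hgi m)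
      -- pushout
      set k : M →ₗ[R] ↥Q × ↥P := LinearMap.prod gbar (-i) with hk
      set N := LinearMap.range k with hN
      let E : ModuleCat.{u} R := ModuleCat.of R ((↥Q × ↥P) ⧸ N)
      set j : ↥Q →ₗ[R] E := N.mkQ ∘ₗ LinearMap.inl R ↥Q ↥P with hj
      have hπ0 : ∀ x ∈ N, (p ∘ₗ LinearMap.snd R ↥Q ↥P) x = 0 := by
        rintro x ⟨m, rfl⟩
        simp [hk, hpi]
      set π : E →ₗ[R] M := N.liftQ (p ∘ₗ LinearMap.snd R ↥Q ↥P)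
        (fun x hx => hπ0 x hx) with hπ
      have hπmk : ∀ q x, π (N.mkQ (q, x)) = p x := by
        intro q x
        exact LinearMap.congr_fun (N.liftQ_mkQ (p ∘ₗ LinearMap.snd R ↥Q ↥P)
          (fun x hx => hπ0 x hx)) (q, x)
      have hjinj : Function.Injective j := by
        rw [← LinearMap.ker_eq_bot]
        ext q
        simp only [Submodule.mem_bot, LinearMap.mem_ker, hj, LinearMap.comp_apply,
          LinearMap.inl_apply]
        constructor
        · intro hq
          have : ((q, 0) : ↥Q × ↥P) ∈ N := by
            rwa [← Submodule.Quotient.mk_eq_zero, ← Submodule.mkQ_apply]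
          obtain ⟨m, hm⟩ := this
          have hm1 : gbar m = q := congrArg Prod.fst hm
          have hm2 : -i m = 0 := congrArg Prod.snd hm
          have : m = 0 := hi (by simpa [neg_eq_zero] using hm2)
          rw [← hm1, this, map_zero]
        · rintro rfl; exact (N.mkQ).map_zero
      have hπsurj : Function.Surjective π := by
        intro m
        obtain ⟨x, hx⟩ := hp m
        exact ⟨N.mkQ (0, x), by rw [hπmk]; exact hx⟩
      have hrg : LinearMap.range j = LinearMap.ker π := by
        ext z
        constructor
        · rintro ⟨q, rfl⟩
          rw [LinearMap.mem_ker]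
          exact (hπmk q 0).trans (map_zero p)
        · intro hz
          obtain ⟨⟨q, x⟩, rfl⟩ := N.mkQ_surjective z
          have hpx : p x = 0 := by rwa [LinearMap.mem_ker, hπmk] at hz
          have : x ∈ LinearMap.range i := by rw [hip]; exact hpx
          obtain ⟨m, rfl⟩ := this
          refine ⟨q + gbar m, ?_⟩
          simp only [hj, LinearMap.comp_apply, LinearMap.inl_apply]
          refine ((Submodule.Quotient.eq N).mpr ?_).symm
          refine ⟨-m, ?_⟩
          have hkm : k (-m) = (-(gbar m), i m) := by
            simp [hk]
          rw [hkm]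
          apply Prod.ext <;> simp
      obtain ⟨s, hs⟩ := hext1 Q hQ E j π hjinj hπsurj hrg
      set φ : ↥P →ₗ[R] E := N.mkQ ∘ₗ LinearMap.inr R ↥Q ↥P with hφ
      have hπφ : ∀ x, π (φ x) = p x := by
        intro x
        simp only [hφ, LinearMap.comp_apply, LinearMap.inr_apply]
        exact hπmk 0 x
      set t' : ↥P →ₗ[R] E := φ - s ∘ₗ p with ht'
      have h1 : LinearMap.range t' ≤ LinearMap.range j := by
        rw [hrg]
        rintro z ⟨x, rfl⟩
        have hsx : π (s (p x)) = p x := by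
          have := congrArg (fun k => k (p x)) hs; simpa using this
        simp [LinearMap.mem_ker, ht', hπφ, hsx]
      obtain ⟨h, hh⟩ := factor_inj j hjinj t' h1
      refine ⟨h, ?_⟩
      have key : ∀ m, h (i m) = gbar m := by
        intro m
        apply hjinj
        have h2 : j (h (i m)) = t' (i m) := by
          have := congrArg (fun k => k (i m)) hh; simpa using this
        rw [h2, ht']
        simp only [LinearMap.sub_apply, LinearMap.comp_apply]
        rw [hpi, map_zero, sub_zero]
        -- φ (i m) = j (gbar m)
        show φ (i m) = j (gbar m)
        simp only [hφ, hj, LinearMap.comp_apply, LinearMap.inr_apply, LinearMap.inl_apply]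
        refine (Submodule.Quotient.eq N).mpr ⟨-m, ?_⟩
        have hkm : k (-m) = (-(gbar m), i m) := by
          simp [hk]
        rw [hkm]
        apply Prod.ext <;> simp
      ext x
      show g x = h (i (p x))
      rw [key (p x)]
      have := congrArg (fun k => k x) hgbar
      simpa using this.symm
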